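/- Let M be a pairwise compatible finite family of 3-state characters on a finite set of taxa X, let c be a character of M, and let i be a state of c. Then i is a dependent state of c if and only if there exist a character d of M and a path p1–p2–p3–p4–p5 of length four (four edges and five pairwise distinct vertices) in the partition intersection graph of c and d whose middle vertex p3 is the vertex (c, i). -/

import Mathlib

/-- A perfect phylogeny for a family of `k`-state characters `chars` (indexed by `F`)
on a finite set of taxa `X`: a finite tree `T` with a labeling `ℓ` of its vertices by
full state-assignments, such that every taxon's state-assignment occurs at some vertex,
and for each character and state the vertices carrying that state induce a connected
subgraph of `T`. -/
def PerfectPhylogeny {X F : Type} [Fintype X] [Fintype F] (k : ℕ)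
    (chars : F → X → Fin k) : Prop :=
  ∃ (V : Type) (_ : Fintype V) (T : SimpleGraph V) (ℓ : V → F → Fin k),
    T.IsTree ∧
    (∀ x : X, ∃ v : V, ∀ f : F, ℓ v f = chars f x) ∧
    ∀ (f : F) (s : Fin k), (T.induce {v : V | ℓ v f = s}).Preconnected

/-- Two characters `a, b` have a perfect phylogeny (as a two-member family). -/
def PairPP {X : Type} [Fintype X] (k : ℕ) (a b : X → Fin k) : Prop :=
  PerfectPhylogeny k ![a, b]

/-- The subfamily of `chars` indexed by the finite set `S` has a perfect phylogeny. -/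
def SubPP {X F : Type} [Fintype X] [Fintype F] (k : ℕ) (chars : F → X → Fin k)
    (S : Finset F) : Prop :=
  PerfectPhylogeny k (fun f : {x // x ∈ S} => chars f.1)

/-- A family of characters is pairwise compatible if every two of its characters
have a perfect phylogeny. -/
def PairwiseCompatible {X F : Type} [Fintype X] [Fintype F] (k : ℕ)
    (chars : F → X → Fin k) : Prop :=
  ∀ a b : F, a ≠ b → PairPP k (chars a) (chars b)

/-- The partition intersection graph of two characters `a, b`.  The vertex `(false, i)`
represents state `i` of `a` and `(true, j)` represents state `j` of `b`; there is an
edge between `(false, i)` and `(true, j)` exactly when some taxon has state `i` for `a`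
and state `j` for `b`, and no edges between vertices of the same character. -/
def pig {X : Type} {k : ℕ} (a b : X → Fin k) : SimpleGraph (Bool × Fin k) where
  Adj u v :=
    (u.1 = false ∧ v.1 = true ∧ ∃ x, a x = u.2 ∧ b x = v.2) ∨
    (u.1 = true ∧ v.1 = false ∧ ∃ x, a x = v.2 ∧ b x = u.2)
  symm := by
    constructor
    rintro ⟨ub, us⟩ ⟨vb, vs⟩ (⟨h1, h2, x, hx⟩ | ⟨h1, h2, x, hx⟩) <;>
      subst h1 <;> subst h2
    · exact Or.inr ⟨rfl, rfl, x, hx⟩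
    · exact Or.inl ⟨rfl, rfl, x, hx⟩
  loopless := by
    constructor
    rintro ⟨ub, us⟩ (⟨h1, h2, -⟩ | ⟨h1, h2, -⟩) <;> simp_all

/-- The binarized character `c(i)` of a 3-state character `c`: state `0` on taxa
where `c` has state `i`, and state `1` elsewhere. -/
def bin {X : Type} (c : X → Fin 3) (i : Fin 3) : X → Fin 2 :=
  fun x => if c x = i then 0 else 1

/-- State `i` of character `c` (of the family `chars`) is dependent: some character `d`
has two distinct states `j, k` such that `c(i)` is incompatible with both `d(j)` and `d(k)`. -/
def DependentState {X F : Type} [Fintype X] [Fintype F] (chars : F → X → Fin 3)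
    (c : F) (i : Fin 3) : Prop :=
  ∃ (d : F) (j k : Fin 3), j ≠ k ∧
    ¬ PairPP 2 (bin (chars c) i) (bin (chars d) j) ∧
    ¬ PairPP 2 (bin (chars c) i) (bin (chars d) k)

/-- `d` is a witness that state `i` of `c` is dependent. -/
def WitnessOf {X F : Type} [Fintype X] [Fintype F] (chars : F → X → Fin 3)
    (c : F) (i : Fin 3) (d : F) : Prop :=
  ∃ j k : Fin 3, j ≠ k ∧
    ¬ PairPP 2 (bin (chars c) i) (bin (chars d) j) ∧
    ¬ PairPP 2 (bin (chars c) i) (bin (chars d) k)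

/-- The graph `G` contains a path of length four (five pairwise distinct vertices,
four edges) whose middle vertex is `m`. -/
def HasPathLen4Mid {V : Type} (G : SimpleGraph V) (m : V) : Prop :=
  ∃ p : Fin 5 → V, Function.Injective p ∧
    (∀ t : Fin 4, G.Adj (p t.castSucc) (p t.succ)) ∧ p 2 = m

/-- Some taxon realizes the pair of states `(i, j)` for the pair of characters `(u, v)`. -/
def realizes {X : Type} (u v : X → Fin 3) (i j : Fin 3) : Prop :=
  ∃ t, u t = i ∧ v t = j


set_option linter.unusedSectionVars false

open SimpleGraph

section Infra
variable {V : Type} {T : SimpleGraph V}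

/-- From preconnectedness of an induced subgraph, get a walk staying in the set. -/
lemma walk_in_set {S : Set V} (h : (T.induce S).Preconnected) {u v : V}
    (hu : u ∈ S) (hv : v ∈ S) : ∃ w : T.Walk u v, ∀ x ∈ w.support, x ∈ S := by
  obtain ⟨p⟩ := h ⟨u, hu⟩ ⟨v, hv⟩
  let f : T.induce S →g T := ⟨Subtype.val, fun {a b} hab => hab⟩
  refine ⟨p.map f, ?_⟩
  intro x hx
  rw [Walk.support_map, List.mem_map] at hx
  obtain ⟨y, _, rfl⟩ := hx
  exact y.2

/-- Along a walk from a `P`-vertex to a non-`P`-vertex there is a crossing edge. -/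
lemma exists_crossing (P : V → Prop) {u v : V} (w : T.Walk u v) (hu : P u) (hv : ¬ P v) :
    ∃ x y, T.Adj x y ∧ P x ∧ ¬ P y ∧ x ∈ w.support ∧ y ∈ w.support := by
  induction w with
  | nil => exact absurd hu hv
  | @cons s m t adj p ih =>
    by_cases hm : P m
    · obtain ⟨x, y, h1, h2, h3, h4, h5⟩ := ih hm hv
      exact ⟨x, y, h1, h2, h3, by simp [Walk.support_cons, h4], by simp [Walk.support_cons, h5]⟩
    · exact ⟨s, m, adj, hu, hm, Walk.start_mem_support _,
        by simp [Walk.support_cons, Walk.start_mem_support]⟩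

/-- Vertices reachable from `u0` without using the edge `u0w0`. -/
def AvoidReach (T : SimpleGraph V) (u0 w0 x : V) : Prop :=
  ∃ p : T.Walk u0 x, s(u0, w0) ∉ p.edges

lemma avoidReach_self (u0 w0 : V) : AvoidReach T u0 w0 u0 := ⟨Walk.nil, by simp⟩

lemma not_avoidReach (hac : T.IsAcyclic) {u0 w0 : V} (hadj : T.Adj u0 w0) :
    ¬ AvoidReach T u0 w0 w0 := by
  rintro ⟨p, hp⟩
  have hb := (isAcyclic_iff_forall_adj_isBridge.mp hac) hadj
  rw [isBridge_iff] at hb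
  exact hb (reachable_delete_edges_iff_exists_walk.mpr ⟨p, hp⟩)

/-- If a walk inside `S` goes from an avoid-reachable vertex to a non-avoid-reachable
vertex, then both endpoints of the separating edge belong to `S`. -/
lemma crossing_mem {u0 w0 : V} {S : Set V} {p q : V} (W : T.Walk p q)
    (hS : ∀ x ∈ W.support, x ∈ S) (hp : AvoidReach T u0 w0 p)
    (hq : ¬ AvoidReach T u0 w0 q) : u0 ∈ S ∧ w0 ∈ S := by
  by_cases he : s(u0, w0) ∈ W.edges
  · exact ⟨hS _ (Walk.fst_mem_support_of_mem_edges W he),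
      hS _ (Walk.snd_mem_support_of_mem_edges W he)⟩
  · exfalso
    obtain ⟨p0, hp0⟩ := hp
    refine hq ⟨p0.append W, ?_⟩
    rw [Walk.edges_append, List.mem_append]
    rintro (h | h) <;> [exact hp0 h; exact he h]

lemma reach_of_connected {u0 w0 : V} {S : Set V} (hpre : (T.induce S).Preconnected)
    {p q : V} (hp : p ∈ S) (hq : q ∈ S) (hCp : AvoidReach T u0 w0 p)
    (hw : u0 ∉ S ∨ w0 ∉ S) : AvoidReach T u0 w0 q := by
  by_contra h
  obtain ⟨W, hWS⟩ := walk_in_set hpre hp hq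
  obtain ⟨h1, h2⟩ := crossing_mem W hWS hCp h
  rcases hw with h' | h' <;> exact h' ‹_›

end Infra
section Compat
open SimpleGraph

lemma pathGraph3_isTree : (SimpleGraph.pathGraph 3).IsTree := by
  constructor
  · exact pathGraph_connected 2
  · intro v c hc
    have h3 := hc.three_le_length
    have hnd := hc.edges_nodup
    have hsub : ∀ e ∈ c.edges, e = s((0 : Fin 3), 1) ∨ e = s((1 : Fin 3), 2) := by
      intro e he
      have := c.edges_subset_edgeSet he
      revert this
      refine Sym2.ind (fun x y => ?_) e
      rw [SimpleGraph.mem_edgeSet, pathGraph_adj]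
      revert x y; decide
    have hlen : c.edges.length = c.length := c.length_edges
    rcases hE : c.edges with _ | ⟨e1, _ | ⟨e2, _ | ⟨e3, rest⟩⟩⟩ <;>
      rw [hE] at hlen hnd hsub <;> simp_all <;> try omega
    obtain ⟨⟨h12, h13, -⟩, ⟨h23, -⟩, -⟩ := hnd
    obtain ⟨hs1, hs2, hs3, -⟩ := hsub
    rcases hs1 with rfl | rfl <;> rcases hs2 with rfl | rfl <;> rcases hs3 with rfl | rfl <;>
      simp_all
end Compat

section LemmaA
open SimpleGraph
variable {X : Type} [Fintype X]

/-- If some gamete pattern is missing, two 2-state characters are compatible. -/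
lemma pairPP_of_missing (a b : X → Fin 2) (s t : Fin 2)
    (h : ¬ ∃ x, a x = s ∧ b x = t) : PairPP 2 a b := by
  classical
  have flip : ∀ z w : Fin 2, z ≠ w → z = w + 1 := by decide
  have nself : ∀ z : Fin 2, z ≠ z + 1 := by decide
  refine ⟨Fin 3, inferInstance, pathGraph 3, ?_, pathGraph3_isTree, ?_, ?_⟩
  · exact fun v f =>
      if v = 0 then (if f = 0 then s else t + 1)
      else if v = 1 then (if f = 0 then s + 1 else t + 1)
      else (if f = 0 then s + 1 else t)
  · intro x
    by_cases ha : a x = s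
    · have hb : b x = t + 1 := flip _ _ (fun hb => h ⟨x, ha, hb⟩)
      refine ⟨0, fun f => ?_⟩
      fin_cases f <;> simp [ha, hb]
    · have ha' : a x = s + 1 := flip _ _ ha
      by_cases hb : b x = t
      · refine ⟨2, fun f => ?_⟩
        fin_cases f <;> simp [ha', hb]
      · have hb' : b x = t + 1 := flip _ _ hb
        refine ⟨1, fun f => ?_⟩
        fin_cases f <;> simp [ha', hb']
  · intro f s0
    rintro ⟨x, hx⟩ ⟨y, hy⟩
    simp only [Set.mem_setOf_eq] at hx hy
    have adj01 : (pathGraph 3).Adj 0 1 := by rw [pathGraph_adj]; decide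
    have adj12 : (pathGraph 3).Adj 1 2 := by rw [pathGraph_adj]; decide
    have radj : ∀ (S : Set (Fin 3)) (x y : {v // v ∈ S}),
        (pathGraph 3).Adj x.val y.val → ((pathGraph 3).induce S).Reachable x y :=
      fun S x y h => Adj.reachable h
    fin_cases f <;> fin_cases x <;> fin_cases y <;>
      simp only [Fin.ext_iff, Fin.val_zero, Fin.val_one, Fin.val_two, show (2:Fin 3).val = 2 from rfl,
        Nat.zero_ne_one, Nat.one_ne_zero, ite_true, ite_false, reduceIte, Fin.isValue] at hx hy <;>
      norm_num at hx hy ⊢ <;>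
      first
        | exact Reachable.refl _
        | exact radj _ _ _ adj01
        | exact radj _ _ _ adj12
        | exact radj _ _ _ adj01.symm
        | exact radj _ _ _ adj12.symm
        | exact absurd (Fin.val_injective (hx.trans hy.symm)).symm (nself _)
        | exact absurd (Fin.val_injective (hy.trans hx.symm)).symm (nself _)
end LemmaA
section Incompat
open SimpleGraph
variable {X : Type} [Fintype X]

/-- Four-gamete condition implies incompatibility for 2-state characters. -/
lemma B2 (a b : X → Fin 2)
    (h00 : ∃ x, a x = 0 ∧ b x = 0) (h01 : ∃ x, a x = 0 ∧ b x = 1)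
    (h10 : ∃ x, a x = 1 ∧ b x = 0) (h11 : ∃ x, a x = 1 ∧ b x = 1) :
    ¬ PairPP 2 a b := by
  rintro ⟨V, _, T, ℓ, hT, hX, hConn⟩
  have lab : ∀ x : X, ∃ v : V, ℓ v 0 = a x ∧ ℓ v 1 = b x := by
    intro x
    obtain ⟨v, hv⟩ := hX x
    exact ⟨v, by simpa using hv 0, by simpa using hv 1⟩
  obtain ⟨x00, hx00a, hx00b⟩ := h00
  obtain ⟨x01, hx01a, hx01b⟩ := h01
  obtain ⟨x10, hx10a, hx10b⟩ := h10
  obtain ⟨x11, hx11a, hx11b⟩ := h11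
  obtain ⟨v00, hv00a, hv00b⟩ := lab x00
  obtain ⟨v01, hv01a, hv01b⟩ := lab x01
  obtain ⟨v10, hv10a, hv10b⟩ := lab x10
  obtain ⟨v11, hv11a, hv11b⟩ := lab x11
  rw [hx00a] at hv00a; rw [hx00b] at hv00b
  rw [hx01a] at hv01a; rw [hx01b] at hv01b
  rw [hx10a] at hv10a; rw [hx10b] at hv10b
  rw [hx11a] at hv11a; rw [hx11b] at hv11b
  -- walk from v00 to v10 inside B0
  obtain ⟨W1, hW1⟩ := walk_in_set (hConn 1 0) (show v00 ∈ {w | ℓ w 1 = 0} from hv00b)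
    (show v10 ∈ {w | ℓ w 1 = 0} from hv10b)
  obtain ⟨u0, w0, hadj, hu0, hw0, hu0s, hw0s⟩ :=
    exists_crossing (fun w => ℓ w 0 = 0) W1 hv00a (show ℓ v10 0 ≠ 0 by rw [hv10a]; decide)
  have hu0B : ℓ u0 1 = 0 := hW1 _ hu0s
  have hw0B : ℓ w0 1 = 0 := hW1 _ hw0s
  have hw0A : ℓ w0 0 = 1 := by
    have : ∀ z : Fin 2, z ≠ 0 → z = 1 := by decide
    exact this _ hw0
  have hCu0 : AvoidReach T u0 w0 u0 := avoidReach_self u0 w0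
  have hNCw0 : ¬ AvoidReach T u0 w0 w0 := not_avoidReach hT.IsAcyclic hadj
  have hA0 : ∀ x, ℓ x 0 = 0 → AvoidReach T u0 w0 x := fun x hx =>
    reach_of_connected (hConn 0 0) hu0 hx hCu0 (Or.inr (by simp [hw0A]))
  have hB1 : ∀ x, ℓ x 1 = 1 → AvoidReach T u0 w0 x := fun x hx =>
    reach_of_connected (hConn 1 1) hv01b hx (hA0 _ hv01a) (Or.inr (by simp [hw0B]))
  obtain ⟨W2, hW2⟩ := walk_in_set (hConn 0 1) (show v11 ∈ {w | ℓ w 0 = 1} from hv11a)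
    (show w0 ∈ {w | ℓ w 0 = 1} from hw0A)
  obtain ⟨h1, h2⟩ := crossing_mem W2 hW2 (hB1 _ hv11b) hNCw0
  rw [Set.mem_setOf_eq, hu0] at h1
  exact absurd h1 (by decide)

/-- A four-cycle in the partition intersection graph of two 3-state characters
implies incompatibility. -/
lemma C3 (u v : X → Fin 3) {i a j k : Fin 3} (hia : i ≠ a) (hjk : j ≠ k)
    (h1 : realizes u v i j) (h2 : realizes u v i k)
    (h3 : realizes u v a j) (h4 : realizes u v a k) :
    ¬ PairPP 3 u v := by
  rintro ⟨V, _, T, ℓ, hT, hX, hConn⟩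
  have lab : ∀ x : X, ∃ w : V, ℓ w 0 = u x ∧ ℓ w 1 = v x := by
    intro x
    obtain ⟨w, hw⟩ := hX x
    exact ⟨w, by simpa using hw 0, by simpa using hw 1⟩
  obtain ⟨x1, hx1u, hx1v⟩ := h1
  obtain ⟨x2, hx2u, hx2v⟩ := h2
  obtain ⟨x3, hx3u, hx3v⟩ := h3
  obtain ⟨x4, hx4u, hx4v⟩ := h4
  obtain ⟨vij, hija, hijb⟩ := lab x1
  obtain ⟨vik, hika, hikb⟩ := lab x2
  obtain ⟨vaj, haja, hajb⟩ := lab x3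
  obtain ⟨vak, haka, hakb⟩ := lab x4
  rw [hx1u] at hija; rw [hx1v] at hijb
  rw [hx2u] at hika; rw [hx2v] at hikb
  rw [hx3u] at haja; rw [hx3v] at hajb
  rw [hx4u] at haka; rw [hx4v] at hakb
  -- first crossing: walk from vij to vaj inside B_j
  obtain ⟨W1, hW1⟩ := walk_in_set (hConn 1 j) (show vij ∈ {w | ℓ w 1 = j} from hijb)
    (show vaj ∈ {w | ℓ w 1 = j} from hajb)
  obtain ⟨u0, w0, hadj, hu0, hw0, hu0s, hw0s⟩ :=
    exists_crossing (fun w => ℓ w 0 = i) W1 hija (show ℓ vaj 0 ≠ i by rw [haja]; exact hia.symm)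
  have hu0B : ℓ u0 1 = j := hW1 _ hu0s
  have hw0B : ℓ w0 1 = j := hW1 _ hw0s
  have hCu0 : AvoidReach T u0 w0 u0 := avoidReach_self u0 w0
  have hNCw0 : ¬ AvoidReach T u0 w0 w0 := not_avoidReach hT.IsAcyclic hadj
  have hAi : ∀ x, ℓ x 0 = i → AvoidReach T u0 w0 x := fun x hx =>
    reach_of_connected (hConn 0 i) hu0 hx hCu0 (Or.inr hw0)
  have hBk : ∀ x, ℓ x 1 = k → AvoidReach T u0 w0 x := fun x hx =>
    reach_of_connected (hConn 1 k) hikb hx (hAi _ hika)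
      (Or.inr (by simp only [Set.mem_setOf_eq, hw0B]; exact hjk))
  have hAa : ∀ x, ℓ x 0 = a → AvoidReach T u0 w0 x := fun x hx =>
    reach_of_connected (hConn 0 a) haka hx (hBk _ hakb)
      (Or.inl (by simp only [Set.mem_setOf_eq, hu0]; exact hia))
  have hmi : ℓ w0 0 ≠ i := hw0
  have hma : ℓ w0 0 ≠ a := fun h => hNCw0 (hAa _ h)
  -- second crossing: walk from vik to vak inside B_k
  obtain ⟨W2, hW2⟩ := walk_in_set (hConn 1 k) (show vik ∈ {w | ℓ w 1 = k} from hikb)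
    (show vak ∈ {w | ℓ w 1 = k} from hakb)
  obtain ⟨u1, w1, hadj1, hu1, hw1, hu1s, hw1s⟩ :=
    exists_crossing (fun w => ℓ w 0 = i) W2 hika (show ℓ vak 0 ≠ i by rw [haka]; exact hia.symm)
  have hu1B : ℓ u1 1 = k := hW2 _ hu1s
  have hw1B : ℓ w1 1 = k := hW2 _ hw1s
  have hC1u1 : AvoidReach T u1 w1 u1 := avoidReach_self u1 w1
  have hNC1w1 : ¬ AvoidReach T u1 w1 w1 := not_avoidReach hT.IsAcyclic hadj1
  have hAi1 : ∀ x, ℓ x 0 = i → AvoidReach T u1 w1 x := fun x hx =>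
    reach_of_connected (hConn 0 i) hu1 hx hC1u1 (Or.inr hw1)
  have hBj1 : ∀ x, ℓ x 1 = j → AvoidReach T u1 w1 x := fun x hx =>
    reach_of_connected (hConn 1 j) hijb hx (hAi1 _ hija)
      (Or.inr (by simp only [Set.mem_setOf_eq, hw1B]; exact fun h => hjk h.symm))
  have hAa1 : ∀ x, ℓ x 0 = a → AvoidReach T u1 w1 x := fun x hx =>
    reach_of_connected (hConn 0 a) haja hx (hBj1 _ hajb)
      (Or.inl (by simp only [Set.mem_setOf_eq, hu1]; exact hia))
  have hm'i : ℓ w1 0 ≠ i := hw1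
  have hm'a : ℓ w1 0 ≠ a := fun h => hNC1w1 (hAa1 _ h)
  have hmm : ℓ w0 0 = ℓ w1 0 := by
    have : ∀ i a m m' : Fin 3, i ≠ a → m ≠ i → m ≠ a → m' ≠ i → m' ≠ a → m = m' := by decide
    exact this i a _ _ hia hmi hma hm'i hm'a
  -- final: walk from w1 to w0 inside A_m
  obtain ⟨W3, hW3⟩ := walk_in_set (hConn 0 (ℓ w0 0))
    (show w1 ∈ {w | ℓ w 0 = ℓ w0 0} from hmm.symm) (show w0 ∈ {w | ℓ w 0 = ℓ w0 0} from rfl)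
  obtain ⟨hh1, hh2⟩ := crossing_mem W3 hW3 (hBk _ hw1B) hNCw0
  rw [Set.mem_setOf_eq, hu0] at hh1
  exact hmi hh1.symm
end Incompat
section Main
open SimpleGraph
variable {X : Type} [Fintype X]

lemma bin_eq_zero (w : X → Fin 3) (s : Fin 3) (x : X) : bin w s x = 0 ↔ w x = s := by
  by_cases h : w x = s <;> simp [bin, h]

lemma bin_eq_one (w : X → Fin 3) (s : Fin 3) (x : X) : bin w s x = 1 ↔ w x ≠ s := by
  by_cases h : w x = s <;> simp [bin, h]

/-- Four-gamete characterization of incompatibility of binarized characters. -/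
lemma notPairPP_bin_iff (u v : X → Fin 3) (i j : Fin 3) :
    ¬ PairPP 2 (bin u i) (bin v j) ↔
      ((∃ x, u x = i ∧ v x = j) ∧ (∃ x, u x = i ∧ v x ≠ j) ∧
       (∃ x, u x ≠ i ∧ v x = j) ∧ (∃ x, u x ≠ i ∧ v x ≠ j)) := by
  constructor
  · intro hnp
    refine ⟨?_, ?_, ?_, ?_⟩ <;> by_contra hm
    · exact hnp (pairPP_of_missing _ _ 0 0 (fun ⟨x, h0, h1⟩ =>
        hm ⟨x, (bin_eq_zero u i x).mp h0, (bin_eq_zero v j x).mp h1⟩))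
    · exact hnp (pairPP_of_missing _ _ 0 1 (fun ⟨x, h0, h1⟩ =>
        hm ⟨x, (bin_eq_zero u i x).mp h0, (bin_eq_one v j x).mp h1⟩))
    · exact hnp (pairPP_of_missing _ _ 1 0 (fun ⟨x, h0, h1⟩ =>
        hm ⟨x, (bin_eq_one u i x).mp h0, (bin_eq_zero v j x).mp h1⟩))
    · exact hnp (pairPP_of_missing _ _ 1 1 (fun ⟨x, h0, h1⟩ =>
        hm ⟨x, (bin_eq_one u i x).mp h0, (bin_eq_one v j x).mp h1⟩))
  · rintro ⟨⟨x1, h1a, h1b⟩, ⟨x2, h2a, h2b⟩, ⟨x3, h3a, h3b⟩, ⟨x4, h4a, h4b⟩⟩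
    exact B2 _ _
      ⟨x1, (bin_eq_zero u i x1).mpr h1a, (bin_eq_zero v j x1).mpr h1b⟩
      ⟨x2, (bin_eq_zero u i x2).mpr h2a, (bin_eq_one v j x2).mpr h2b⟩
      ⟨x3, (bin_eq_one u i x3).mpr h3a, (bin_eq_zero v j x3).mpr h3b⟩
      ⟨x4, (bin_eq_one u i x4).mpr h4a, (bin_eq_one v j x4).mpr h4b⟩
end Main

theorem dependent_iff_path_of_length_four'
    {X F : Type} [Fintype X] [Fintype F] (chars : F → X → Fin 3)
    (hpc : PairwiseCompatible 3 chars) (c : F) (i : Fin 3) :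
    DependentState chars c i ↔
      ∃ d : F, HasPathLen4Mid (pig (chars c) (chars d)) (false, i) := by
  constructor
  · rintro ⟨d, j, k, hjk, hnj, hnk⟩
    rw [notPairPP_bin_iff] at hnj hnk
    obtain ⟨Gj1, Gj2, Gj3, -⟩ := hnj
    obtain ⟨Gk1, -, Gk3, -⟩ := hnk
    obtain ⟨x1, hx1c, hx1d⟩ := Gj1
    obtain ⟨x2, hx2c, hx2d⟩ := Gk1
    obtain ⟨x3, hx3c, hx3d⟩ := Gj3
    obtain ⟨x4, hx4c, hx4d⟩ := Gk3
    have hcd : c ≠ d := by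
      rintro rfl
      rcases eq_or_ne i j with rfl | hij
      · obtain ⟨x, hx, hx'⟩ := Gj2
        exact hx' hx
      · exact hij (hx1c.symm.trans hx1d)
    by_cases hab : chars c x3 = chars c x4
    · exact absurd (hpc c d hcd)
        (C3 (chars c) (chars d) (Ne.symm hx3c) hjk ⟨x1, hx1c, hx1d⟩ ⟨x2, hx2c, hx2d⟩
          ⟨x3, rfl, hx3d⟩ ⟨x4, hab.symm, hx4d⟩)
    · refine ⟨d, fun t => match t with
        | 0 => (false, chars c x3) | 1 => (true, j) | 2 => (false, i)
        | 3 => (true, k) | 4 => (false, chars c x4), ?_, ?_, rfl⟩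
      · intro s t h
        fin_cases s <;> fin_cases t <;> simp_all [Prod.ext_iff]
      · intro t
        fin_cases t
        · exact Or.inl ⟨rfl, rfl, x3, rfl, hx3d⟩
        · exact Or.inr ⟨rfl, rfl, x1, hx1c, hx1d⟩
        · exact Or.inl ⟨rfl, rfl, x2, hx2c, hx2d⟩
        · exact Or.inr ⟨rfl, rfl, x4, rfl, hx4d⟩
  · rintro ⟨d, p, hinj, hadj, hmid⟩
    have h12 : (pig (chars c) (chars d)).Adj (p 1) (p 2) := hadj 1
    have h23 : (pig (chars c) (chars d)).Adj (p 2) (p 3) := hadj 2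
    have h01 : (pig (chars c) (chars d)).Adj (p 0) (p 1) := hadj 0
    have h34 : (pig (chars c) (chars d)).Adj (p 3) (p 4) := hadj 3
    rw [hmid] at h12 h23
    rcases h12 with ⟨-, hbad, -⟩ | ⟨hf1, -, x1, hx1c, hx1d⟩
    · simp at hbad
    rcases h23 with ⟨-, hf3, x2, hx2c, hx2d⟩ | ⟨hbad, -, -⟩
    swap
    · simp at hbad
    rcases h01 with ⟨hf0, -, x3, hx3c, hx3d⟩ | ⟨-, hbad, -⟩
    swap
    · rw [hf1] at hbad; simp at hbad
    rcases h34 with ⟨hbad, -, -⟩ | ⟨-, hf4, x4, hx4c, hx4d⟩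
    · rw [hf3] at hbad; simp at hbad
    have hne : ∀ s t : Fin 5, s ≠ t → p s ≠ p t := fun s t h hh => h (hinj hh)
    have ha : (p 0).2 ≠ i := fun h =>
      hne 0 2 (by decide) (by rw [hmid]; exact Prod.ext_iff.mpr ⟨hf0, h⟩)
    have hb : (p 4).2 ≠ i := fun h =>
      hne 4 2 (by decide) (by rw [hmid]; exact Prod.ext_iff.mpr ⟨hf4, h⟩)
    have hjk : (p 1).2 ≠ (p 3).2 := fun h =>
      hne 1 3 (by decide) (Prod.ext_iff.mpr ⟨hf1.trans hf3.symm, h⟩)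
    refine ⟨d, (p 1).2, (p 3).2, hjk, ?_, ?_⟩ <;> rw [notPairPP_bin_iff]
    · exact ⟨⟨x1, hx1c, hx1d⟩,
        ⟨x2, hx2c, by rw [hx2d]; exact fun h => hjk h.symm⟩,
        ⟨x3, by rw [hx3c]; exact ha, hx3d⟩,
        ⟨x4, by rw [hx4c]; exact hb, by rw [hx4d]; exact fun h => hjk h.symm⟩⟩
    · exact ⟨⟨x2, hx2c, hx2d⟩,
        ⟨x1, hx1c, by rw [hx1d]; exact hjk⟩,
        ⟨x4, by rw [hx4c]; exact hb, hx4d⟩,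
        ⟨x3, by rw [hx3c]; exact ha, by rw [hx3d]; exact hjk⟩⟩

/-- for a pairwise compatible family, state `i` of character `c` is
dependent iff for some character `d` the partition intersection graph of `c` and `d`
has a path of length four whose middle vertex is `(c, i)` (encoded `(false, i)`). -/
theorem dependent_iff_path_of_length_four
    {X F : Type} [Fintype X] [Fintype F] (chars : F → X → Fin 3)
    (hpc : PairwiseCompatible 3 chars) (c : F) (i : Fin 3) :
    DependentState chars c i ↔
      ∃ d : F, HasPathLen4Mid (pig (chars c) (chars d)) (false, i) := by
  exact dependent_iff_path_of_length_four' chars hpc c i
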